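/- Let v, v̂ : [0,1] → ℝ≥0 be integrable, let S* maximize r(S, v) and Ŝ maximize r(S, v̂) over a common family 𝒮 of Borel subsets of [0,1] (e.g. all sets of volume ≤ c). Then r(S*, v) − r(Ŝ, v) ≤ 2‖v − v̂‖₁, where ‖·‖₁ is the L¹ norm on [0,1] and r(S,u) = (∫_S u w dx)/(1 + ∫_S u dx) for a fixed measurable w : [0,1] → [0,1]. -/

import Mathlib

open MeasureTheory Set

lemma stmt16_aux (w u₁ u₂ : ℝ → ℝ)
    (hw_meas : Measurable w)
    (hw_range : ∀ x ∈ Icc (0:ℝ) 1, w x ∈ Icc (0:ℝ) 1)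
    (h₁int : IntegrableOn u₁ (Icc 0 1)) (h₁pos : ∀ x, 0 ≤ u₁ x)
    (h₂int : IntegrableOn u₂ (Icc 0 1)) (h₂pos : ∀ x, 0 ≤ u₂ x)
    (S : Set ℝ) (hS : MeasurableSet S) (hsub : S ⊆ Icc 0 1) :
    (∫ x in S, u₁ x * w x) / (1 + ∫ x in S, u₁ x) -
      (∫ x in S, u₂ x * w x) / (1 + ∫ x in S, u₂ x) ≤
      ∫ x in Icc (0:ℝ) 1, |u₁ x - u₂ x| := by
  have i₁ : IntegrableOn u₁ S := h₁int.mono_set hsub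
  have i₂ : IntegrableOn u₂ S := h₂int.mono_set hsub
  have hwb : ∀ᵐ x ∂(volume.restrict S), ‖w x‖ ≤ 1 := by
    rw [ae_restrict_iff' hS]
    refine ae_of_all _ fun x hx => ?_
    have := hw_range x (hsub hx)
    rw [Real.norm_eq_abs, abs_le]
    constructor <;> linarith [this.1, this.2]
  have i₁w : IntegrableOn (fun x => u₁ x * w x) S := by
    have := Integrable.bdd_mul (c := 1) i₁ (hw_meas.aestronglyMeasurable.restrict) hwb
    simpa [IntegrableOn, mul_comm] using this
  have i₂w : IntegrableOn (fun x => u₂ x * w x) S := by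
    have := Integrable.bdd_mul (c := 1) i₂ (hw_meas.aestronglyMeasurable.restrict) hwb
    simpa [IntegrableOn, mul_comm] using this
  set A₁ := ∫ x in S, u₁ x * w x with hA₁
  set B₁ := ∫ x in S, u₁ x with hB₁
  set A₂ := ∫ x in S, u₂ x * w x with hA₂
  set B₂ := ∫ x in S, u₂ x with hB₂
  have hB₁0 : 0 ≤ B₁ := setIntegral_nonneg hS fun x _ => h₁pos x
  have hB₂0 : 0 ≤ B₂ := setIntegral_nonneg hS fun x _ => h₂pos x
  have hA₂0 : 0 ≤ A₂ := setIntegral_nonneg hS fun x hx =>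
    mul_nonneg (h₂pos x) (hw_range x (hsub hx)).1
  have hA₁B₁ : A₁ ≤ B₁ := by
    refine setIntegral_mono_on i₁w i₁ hS fun x hx => ?_
    have := (hw_range x (hsub hx)).2
    nlinarith [h₁pos x]
  have pos1 : (0:ℝ) < 1 + B₁ := by linarith
  have pos2 : (0:ℝ) < 1 + B₂ := by linarith
  set α := A₁ / (1 + B₁) with hα
  have hα0 : 0 ≤ α := div_nonneg (le_trans (by
    exact setIntegral_nonneg hS fun x hx => mul_nonneg (h₁pos x) (hw_range x (hsub hx)).1) le_rfl) pos1.le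
  have hα1 : α ≤ 1 := by
    rw [hα, div_le_one pos1]; linarith
  have hαA₁ : α * (1 + B₁) = A₁ := div_mul_cancel₀ _ pos1.ne'
  -- integral inequality
  have e1 : A₁ - A₂ = ∫ x in S, (u₁ x * w x - u₂ x * w x) := (integral_sub i₁w i₂w).symm
  have e3 : α * (B₂ - B₁) = ∫ x in S, α * (u₂ x - u₁ x) := by
    rw [← integral_sub i₂ i₁, ← smul_eq_mul, ← integral_smul]
    simp [smul_eq_mul]
  have iIcc : IntegrableOn (fun x => |u₁ x - u₂ x|) (Icc (0:ℝ) 1) := by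
    exact (h₁int.sub h₂int).abs
  have iS : IntegrableOn (fun x => |u₁ x - u₂ x|) S := iIcc.mono_set hsub
  have hsumint : A₁ - A₂ + α * (B₂ - B₁)
      = ∫ x in S, (u₁ x * w x - u₂ x * w x + α * (u₂ x - u₁ x)) := by
    have hadd : (∫ x in S, (u₁ x * w x - u₂ x * w x + α * (u₂ x - u₁ x)))
        = (∫ x in S, (u₁ x * w x - u₂ x * w x)) + ∫ x in S, α * (u₂ x - u₁ x) :=
      integral_add (by exact i₁w.sub i₂w) (by exact (i₂.sub i₁).const_mul α)
    rw [e1, e3, hadd]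
  have hmono : (∫ x in S, (u₁ x * w x - u₂ x * w x + α * (u₂ x - u₁ x)))
      ≤ ∫ x in S, |u₁ x - u₂ x| := by
    refine setIntegral_mono_on (by exact (i₁w.sub i₂w).add ((i₂.sub i₁).const_mul α)) iS hS
      fun x hx => ?_
    have hwx := hw_range x (hsub hx)
    have hwa : |w x - α| ≤ 1 := by
      rw [abs_le]; constructor <;> linarith [hwx.1, hwx.2]
    have key : u₁ x * w x - u₂ x * w x + α * (u₂ x - u₁ x) = (u₁ x - u₂ x) * (w x - α) := by
      ring
    rw [key]
    calc (u₁ x - u₂ x) * (w x - α) ≤ |(u₁ x - u₂ x) * (w x - α)| := le_abs_self _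
      _ = |u₁ x - u₂ x| * |w x - α| := abs_mul _ _
      _ ≤ |u₁ x - u₂ x| * 1 := by
          exact mul_le_mul_of_nonneg_left hwa (abs_nonneg _)
      _ = |u₁ x - u₂ x| := mul_one _
  have hSle : (∫ x in S, |u₁ x - u₂ x|) ≤ ∫ x in Icc (0:ℝ) 1, |u₁ x - u₂ x| := by
    exact setIntegral_mono_set iIcc
      (ae_of_all _ fun x => abs_nonneg _) (HasSubset.Subset.eventuallyLE hsub)
  set ε := ∫ x in Icc (0:ℝ) 1, |u₁ x - u₂ x| with hε
  have hε0 : 0 ≤ ε := integral_nonneg fun x => abs_nonneg _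
  have key : α * (1 + B₂) - A₂ ≤ ε := by nlinarith [hsumint, hmono, hSle]
  -- final arithmetic
  have hβ : A₂ / (1 + B₂) * (1 + B₂) = A₂ := div_mul_cancel₀ _ pos2.ne'
  set β := A₂ / (1 + B₂) with hβd
  have hβ0 : 0 ≤ β := div_nonneg hA₂0 pos2.le
  show α - β ≤ ε
  rcases le_or_gt α β with h | h
  · linarith
  · have hpos : 0 ≤ (α - β) * B₂ := mul_nonneg (by linarith) hB₂0
    nlinarith [key, hβ]

theorem stmt16 (c : ℝ) (hc : c ∈ Ioc (0:ℝ) 1) (w v vhat : ℝ → ℝ)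
    (hw_meas : Measurable w)
    (hw_range : ∀ x ∈ Icc (0:ℝ) 1, w x ∈ Icc (0:ℝ) 1)
    (hv_int : IntegrableOn v (Icc 0 1)) (hv_nonneg : ∀ x, 0 ≤ v x)
    (hvhat_int : IntegrableOn vhat (Icc 0 1)) (hvhat_nonneg : ∀ x, 0 ≤ vhat x)
    (Sstar Shat : Set ℝ)
    (hSstar_meas : MeasurableSet Sstar) (hSstar_sub : Sstar ⊆ Icc 0 1)
    (hSstar_vol : (volume Sstar).toReal ≤ c)
    (hSstar_max : ∀ S : Set ℝ, MeasurableSet S → S ⊆ Icc 0 1 → (volume S).toReal ≤ c →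
      (∫ x in S, v x * w x) / (1 + ∫ x in S, v x) ≤
        (∫ x in Sstar, v x * w x) / (1 + ∫ x in Sstar, v x))
    (hShat_meas : MeasurableSet Shat) (hShat_sub : Shat ⊆ Icc 0 1)
    (hShat_vol : (volume Shat).toReal ≤ c)
    (hShat_max : ∀ S : Set ℝ, MeasurableSet S → S ⊆ Icc 0 1 → (volume S).toReal ≤ c →
      (∫ x in S, vhat x * w x) / (1 + ∫ x in S, vhat x) ≤
        (∫ x in Shat, vhat x * w x) / (1 + ∫ x in Shat, vhat x)) :
    (∫ x in Sstar, v x * w x) / (1 + ∫ x in Sstar, v x) -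
        (∫ x in Shat, v x * w x) / (1 + ∫ x in Shat, v x) ≤
      2 * ∫ x in Icc (0:ℝ) 1, |v x - vhat x| := by
  have h1 := stmt16_aux w v vhat hw_meas hw_range hv_int hv_nonneg hvhat_int hvhat_nonneg
    Sstar hSstar_meas hSstar_sub
  have h2 := stmt16_aux w vhat v hw_meas hw_range hvhat_int hvhat_nonneg hv_int hv_nonneg
    Shat hShat_meas hShat_sub
  have h3 := hShat_max Sstar hSstar_meas hSstar_sub hSstar_vol
  have habs : (∫ x in Icc (0:ℝ) 1, |vhat x - v x|) = ∫ x in Icc (0:ℝ) 1, |v x - vhat x| := by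
    simp [abs_sub_comm]
  rw [habs] at h2
  linarith
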